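/- Let A ∈ ℝ^{m×n} satisfy the restricted isometry property of order 2s with constant δ < 1/√2, i.e., (1−δ)‖z‖₂² ≤ ‖Az‖₂² ≤ (1+δ)‖z‖₂² holds for all 2s-sparse z ∈ ℝⁿ. Then for every s-sparse vector v ∈ ℝⁿ the source condition holds: there exists w ∈ ℝ^m such that (Aᵀw)_i = sign(v_i) for every i ∈ supp(v) and |(Aᵀw)_i| < 1 for every i ∉ supp(v); moreover A restricted to the subspace spanned by the standard basis vectors e_i with i ∈ supp(v) is injective. -/

import Mathlib

open Matrix

/-- `z` has at most `s` nonzero entries. -/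
def IsSparse {n : ℕ} (s : ℕ) (z : Fin n → ℝ) : Prop :=
  ∃ T : Finset (Fin n), T.card ≤ s ∧ ∀ i ∉ T, z i = 0

namespace SCAux

open Finset


noncomputable def spt {n : ℕ} (z : Fin n → ℝ) : Finset (Fin n) := Finset.univ.filter fun i => z i ≠ 0

lemma mem_spt {n : ℕ} {z : Fin n → ℝ} {i : Fin n} : i ∈ spt z ↔ z i ≠ 0 := by simp [spt]

noncomputable def msr {n : ℕ} (θ : ℝ) (u : Fin n → ℝ) : ℕ :=
  (spt u).card + (Finset.univ.filter fun i => u i ≠ 0 ∧ |u i| < θ).card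

lemma abs_add_sign (a t : ℝ) (ha : a ≠ 0) (ht : 0 ≤ t) :
    |a + t * (if 0 < a then 1 else -1)| = |a| + t := by
  rcases ha.lt_or_gt with h | h
  · rw [if_neg (by linarith), abs_of_neg h, abs_of_neg (by linarith : a + t * (-1) < 0)]
    ring
  · rw [if_pos h, abs_of_pos h, abs_of_pos (by linarith : 0 < a + t * 1)]
    ring

lemma abs_sub_sign (a t : ℝ) (ha : a ≠ 0) (ht : 0 ≤ t) (ht' : t ≤ |a|) :
    |a - t * (if 0 < a then 1 else -1)| = |a| - t := by
  rcases ha.lt_or_gt with h | h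
  · rw [abs_of_neg h] at ht'
    rw [if_neg (by linarith), abs_of_neg h, abs_of_nonpos (by linarith : a - t * (-1) ≤ 0)]
    ring
  · rw [abs_of_pos h] at ht'
    rw [if_pos h, abs_of_pos h, abs_of_nonneg (by linarith : 0 ≤ a - t * 1)]
    ring

lemma step_props {n : ℕ} (θ : ℝ) (u : Fin n → ℝ) (i j : Fin n) (hij : i ≠ j)
    (hi : u i ≠ 0) (hj : u j ≠ 0) (hiθ : |u i| < θ) (hjθ : |u j| < θ)
    (hall : ∀ k, |u k| ≤ θ) :
    ∃ (t : ℝ) (w : Fin n → ℝ), 0 < t ∧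
      w i = u i + t * (if 0 < u i then (1:ℝ) else -1) ∧
      w j = u j - t * (if 0 < u j then (1:ℝ) else -1) ∧
      (∀ k, k ≠ i → k ≠ j → w k = u k) ∧
      (∀ k, |w k| ≤ θ) ∧ (∑ k, |w k|) = (∑ k, |u k|) ∧
      (∀ k, u k = 0 → w k = 0) ∧ msr θ w < msr θ u := by
  classical
  set sa : ℝ := if 0 < u i then 1 else -1 with hsa
  set sb : ℝ := if 0 < u j then 1 else -1 with hsb
  set t : ℝ := min (θ - |u i|) |u j| with htdef
  have ht0 : 0 < t := lt_min (by linarith) (abs_pos.2 hj)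
  have ht1 : t ≤ θ - |u i| := min_le_left _ _
  have ht2 : t ≤ |u j| := min_le_right _ _
  set w : Fin n → ℝ := Function.update (Function.update u i (u i + t * sa)) j (u j - t * sb) with hwdef
  have hwi : w i = u i + t * sa := by
    rw [hwdef, Function.update_of_ne hij, Function.update_self]
  have hwj : w j = u j - t * sb := by rw [hwdef, Function.update_self]
  have hwk : ∀ k, k ≠ i → k ≠ j → w k = u k := by
    intro k hki hkj
    rw [hwdef, Function.update_of_ne hkj, Function.update_of_ne hki]
  have habsi : |w i| = |u i| + t := by rw [hwi, hsa]; exact abs_add_sign _ _ hi ht0.le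
  have habsj : |w j| = |u j| - t := by rw [hwj, hsb]; exact abs_sub_sign _ _ hj ht0.le ht2
  refine ⟨t, w, ht0, hwi, hwj, hwk, ?_, ?_, ?_, ?_⟩
  · intro k
    by_cases hki : k = i
    · subst hki; rw [habsi]; linarith
    by_cases hkj : k = j
    · subst hkj; rw [habsj]; linarith
    · rw [hwk k hki hkj]; exact hall k
  · have hptw : ∀ k, |w k| = |u k| + ((if k = i then t else 0) + (if k = j then -t else 0)) := by
      intro k
      by_cases hki : k = i
      · subst hki; rw [if_pos rfl, if_neg hij, habsi]; ring
      by_cases hkj : k = j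
      · subst hkj; rw [if_neg hki, if_pos rfl, habsj]; ring
      · rw [hwk k hki hkj, if_neg hki, if_neg hkj]; ring
    rw [Finset.sum_congr rfl fun k _ => hptw k]
    rw [Finset.sum_add_distrib, Finset.sum_add_distrib]
    rw [Finset.sum_ite_eq' Finset.univ i fun _ => t, Finset.sum_ite_eq' Finset.univ j fun _ => -t]
    simp
  · intro k hk
    have hki : k ≠ i := fun h => hi (h ▸ hk)
    have hkj : k ≠ j := fun h => hj (h ▸ hk)
    rw [hwk k hki hkj]; exact hk
  · have hsub1 : spt w ⊆ spt u := by
      intro k hk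
      rw [mem_spt] at hk ⊢
      by_cases hki : k = i
      · subst hki; exact hi
      by_cases hkj : k = j
      · subst hkj; exact hj
      · rw [hwk k hki hkj] at hk; exact hk
    have hsub2 : (Finset.univ.filter fun k => w k ≠ 0 ∧ |w k| < θ)
        ⊆ (Finset.univ.filter fun k => u k ≠ 0 ∧ |u k| < θ) := by
      intro k hk
      rw [Finset.mem_filter] at hk ⊢
      refine ⟨Finset.mem_univ _, ?_⟩
      by_cases hki : k = i
      · subst hki; exact ⟨hi, hiθ⟩
      by_cases hkj : k = j
      · subst hkj; exact ⟨hj, hjθ⟩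
      · rw [hwk k hki hkj] at hk; exact hk.2
    rcases le_total (θ - |u i|) |u j| with hmin | hmin
    · have htval : t = θ - |u i| := min_eq_left hmin
      have hiDu : i ∈ (Finset.univ.filter fun k => u k ≠ 0 ∧ |u k| < θ) := by
        rw [Finset.mem_filter]; exact ⟨Finset.mem_univ _, hi, hiθ⟩
      have hiDw : i ∉ (Finset.univ.filter fun k => w k ≠ 0 ∧ |w k| < θ) := by
        rw [Finset.mem_filter]
        rintro ⟨-, -, habs⟩
        rw [habsi, htval] at habs
        linarith
      have hlt : (Finset.univ.filter fun k => w k ≠ 0 ∧ |w k| < θ).card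
          < (Finset.univ.filter fun k => u k ≠ 0 ∧ |u k| < θ).card :=
        Finset.card_lt_card ((Finset.ssubset_iff_of_subset hsub2).2 ⟨i, hiDu, hiDw⟩)
      have hle : (spt w).card ≤ (spt u).card := Finset.card_le_card hsub1
      unfold msr; omega
    · have htval : t = |u j| := min_eq_right hmin
      have hjFu : j ∈ spt u := mem_spt.2 hj
      have hjFw : j ∉ spt w := by
        rw [mem_spt]
        intro hne
        apply hne
        have : |w j| = 0 := by rw [habsj, htval]; ring
        exact abs_eq_zero.1 this
      have hlt : (spt w).card < (spt u).card :=
        Finset.card_lt_card ((Finset.ssubset_iff_of_subset hsub1).2 ⟨j, hjFu, hjFw⟩)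
      have hle := Finset.card_le_card hsub2
      unfold msr; omega

lemma lsum_mul_left {α : Type*} (c : ℝ) (L : List α) (f : α → ℝ) :
    (L.map fun p => c * f p).sum = c * (L.map f).sum := by
  induction L with
  | nil => simp
  | cons a tl ih => simp [ih]; ring

set_option maxHeartbeats 1600000 in
lemma decomp {n : ℕ} (s : ℕ) (hs : 1 ≤ s) (θ : ℝ) :
    ∀ (N : ℕ) (u : Fin n → ℝ), msr θ u ≤ N →
    (∀ i, |u i| ≤ θ) → (∑ i, |u i|) ≤ s * θ →
    ∃ L : List (ℝ × (Fin n → ℝ)),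
      (L.map Prod.fst).sum = 1 ∧
      (∀ p ∈ L, 0 ≤ p.1 ∧ (spt p.2).card ≤ s ∧ (∀ i, |p.2 i| ≤ θ) ∧ (∀ i, u i = 0 → p.2 i = 0)) ∧
      (∀ i, (L.map fun p => p.1 * p.2 i).sum = u i) := by
  intro N
  induction N with
  | zero =>
    intro u hm hb hs1
    refine ⟨[(1, u)], by simp, ?_, by simp⟩
    intro p hp
    simp only [List.mem_singleton] at hp
    subst hp
    have hcard : (spt u).card = 0 := by
      have := hm; unfold msr at this; omega
    exact ⟨zero_le_one, by simp only []; omega, hb, fun i h => h⟩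
  | succ N ih =>
    intro u hm hb hs1
    by_cases hc : (spt u).card ≤ s
    · refine ⟨[(1, u)], by simp, ?_, by simp⟩
      intro p hp
      simp only [List.mem_singleton] at hp
      subst hp
      exact ⟨zero_le_one, hc, hb, fun i h => h⟩
    · push_neg at hc
      -- θ > 0
      have hFne : (spt u).Nonempty := Finset.card_pos.1 (by omega)
      obtain ⟨k₀, hk₀⟩ := hFne
      have hθpos : 0 < θ := lt_of_lt_of_le (abs_pos.2 (mem_spt.1 hk₀)) (hb k₀)
      -- two strictly-inside indices
      set D := Finset.univ.filter fun k => u k ≠ 0 ∧ |u k| < θ with hD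
      have hDsub : D ⊆ spt u := by
        intro k hk
        rw [Finset.mem_filter] at hk
        exact mem_spt.2 hk.2.1
      have hsumF : ∑ k ∈ spt u, |u k| = ∑ k, |u k| := by
        apply Finset.sum_subset (Finset.subset_univ _)
        intro x _ hx
        rw [mem_spt, not_not] at hx
        simp [hx]
      have hD2 : 2 ≤ D.card := by
        by_contra hD1
        push_neg at hD1
        have hsd : ∑ k ∈ spt u \ D, |u k| = ((spt u).card - D.card : ℕ) * θ := by
          rw [Finset.sum_congr rfl (fun k hk => ?_), Finset.sum_const, Finset.card_sdiff_of_subset hDsub,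
            nsmul_eq_mul]
          rw [Finset.mem_sdiff, hD, Finset.mem_filter] at hk
          have h1 : u k ≠ 0 := mem_spt.1 hk.1
          have h2 : ¬ |u k| < θ := fun hlt => hk.2 ⟨Finset.mem_univ _, h1, hlt⟩
          linarith [hb k, not_lt.1 h2]
        have hsplit : ∑ k ∈ spt u, |u k| = ∑ k ∈ spt u \ D, |u k| + ∑ k ∈ D, |u k| :=
          (Finset.sum_sdiff hDsub).symm
        have hDpos : 0 ≤ ∑ k ∈ D, |u k| := Finset.sum_nonneg fun k _ => abs_nonneg _
        have hcast : (s + 1 : ℝ) ≤ ((spt u).card - D.card : ℕ) + (D.card : ℕ) := by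
          have : s + 1 ≤ (spt u).card := hc
          have h4 : ((spt u).card - D.card) + D.card = (spt u).card := by omega
          calc (s + 1 : ℝ) ≤ ((spt u).card : ℝ) := by exact_mod_cast hc
          _ = _ := by exact_mod_cast h4.symm
        -- bound sum below
        have hDbound : ∑ k ∈ D, |u k| ≤ (D.card : ℝ) * θ := by
          have := Finset.sum_le_card_nsmul D (fun x => |u x|) θ (fun x _ => hb x)
          simpa [nsmul_eq_mul] using this
        have : (s:ℝ) * θ < ∑ k, |u k| := by
          rw [← hsumF, hsplit, hsd]
          rcases Nat.le_one_iff_eq_zero_or_eq_one.1 (by omega : #D ≤ 1) with h0 | h1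
          · have hD0 : D = ∅ := Finset.card_eq_zero.1 h0
            rw [hD0]
            simp only [Finset.sum_empty, add_zero]
            have : (s + 1 : ℝ) ≤ ((spt u).card - D.card : ℕ) := by
              rw [h0] at hcast ⊢
              simpa using hcast
            nlinarith
          · obtain ⟨k₁, hk1⟩ := Finset.card_eq_one.1 h1
            have hk1D : k₁ ∈ D := by rw [hk1]; exact Finset.mem_singleton_self _
            rw [hk1, Finset.sum_singleton]
            have hpos : 0 < |u k₁| := by
              rw [hD, Finset.mem_filter] at hk1D
              exact abs_pos.2 hk1D.2.1
            have hcard : (s:ℝ) ≤ (((spt u).card - ({k₁} : Finset (Fin n)).card : ℕ) : ℝ) := by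
              have h5 : s ≤ (spt u).card - ({k₁} : Finset (Fin n)).card := by
                rw [← hk1]; omega
              exact_mod_cast h5
            nlinarith [hcard, hθpos, hpos]
        linarith
      obtain ⟨i, hiD, j, hjD, hij⟩ := Finset.one_lt_card.1 hD2
      rw [hD, Finset.mem_filter] at hiD hjD
      obtain ⟨-, hi, hiθ⟩ := hiD
      obtain ⟨-, hj, hjθ⟩ := hjD
      obtain ⟨t₁, w₁, ht₁, hw₁i, hw₁j, hw₁k, hw₁b, hw₁s, hw₁z, hw₁m⟩ :=
        step_props θ u i j hij hi hj hiθ hjθ hb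
      obtain ⟨t₂, w₂, ht₂, hw₂j, hw₂i, hw₂k, hw₂b, hw₂s, hw₂z, hw₂m⟩ :=
        step_props θ u j i hij.symm hj hi hjθ hiθ hb
      have hsum₁ : ∑ k, |w₁ k| ≤ s * θ := by rw [hw₁s]; exact hs1
      have hsum₂ : ∑ k, |w₂ k| ≤ s * θ := by rw [hw₂s]; exact hs1
      obtain ⟨L₁, hL₁sum, hL₁mem, hL₁rec⟩ := ih w₁ (by omega) hw₁b hsum₁
      obtain ⟨L₂, hL₂sum, hL₂mem, hL₂rec⟩ := ih w₂ (by omega) hw₂b hsum₂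
      set lam : ℝ := t₂ / (t₁ + t₂) with hlam
      have htt : 0 < t₁ + t₂ := by linarith
      have hlam0 : 0 ≤ lam := div_nonneg ht₂.le htt.le
      have hlam1 : 1 - lam = t₁ / (t₁ + t₂) := by
        rw [hlam]; field_simp; ring
      have hlam1' : 0 ≤ 1 - lam := by rw [hlam1]; exact div_nonneg ht₁.le htt.le
      refine ⟨L₁.map (fun p => (lam * p.1, p.2)) ++ L₂.map (fun p => ((1 - lam) * p.1, p.2)),
        ?_, ?_, ?_⟩
      · rw [List.map_append, List.sum_append, List.map_map, List.map_map]
        have e1 : (Prod.fst ∘ fun p : ℝ × (Fin n → ℝ) => (lam * p.1, p.2)) = fun p => lam * p.1 := rfl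
        have e2 : (Prod.fst ∘ fun p : ℝ × (Fin n → ℝ) => ((1-lam) * p.1, p.2)) = fun p => (1-lam) * p.1 := rfl
        rw [e1, e2, lsum_mul_left lam L₁ Prod.fst, lsum_mul_left (1-lam) L₂ Prod.fst,
          hL₁sum, hL₂sum]
        ring
      · intro p hp
        rw [List.mem_append] at hp
        rcases hp with hp | hp
        · rw [List.mem_map] at hp
          obtain ⟨q, hq, rfl⟩ := hp
          obtain ⟨hq0, hqcard, hqb, hqz⟩ := hL₁mem q hq
          refine ⟨mul_nonneg hlam0 hq0, hqcard, hqb, ?_⟩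
          intro k hk
          have hki : k ≠ i := fun h => hi (h ▸ hk)
          have hkj : k ≠ j := fun h => hj (h ▸ hk)
          exact hqz k (by rw [hw₁k k hki hkj]; exact hk)
        · rw [List.mem_map] at hp
          obtain ⟨q, hq, rfl⟩ := hp
          obtain ⟨hq0, hqcard, hqb, hqz⟩ := hL₂mem q hq
          refine ⟨mul_nonneg hlam1' hq0, hqcard, hqb, ?_⟩
          intro k hk
          have hki : k ≠ i := fun h => hi (h ▸ hk)
          have hkj : k ≠ j := fun h => hj (h ▸ hk)
          exact hqz k (by rw [hw₂k k hkj hki]; exact hk)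
      · intro k
        rw [List.map_append, List.sum_append, List.map_map, List.map_map]
        have e1 : ((fun p : ℝ × (Fin n → ℝ) => p.1 * p.2 k) ∘ fun p : ℝ × (Fin n → ℝ) => (lam * p.1, p.2))
            = fun p : ℝ × (Fin n → ℝ) => lam * (p.1 * p.2 k) := by
          funext p; simp; ring
        have e2 : ((fun p : ℝ × (Fin n → ℝ) => p.1 * p.2 k) ∘ fun p : ℝ × (Fin n → ℝ) => ((1-lam) * p.1, p.2))
            = fun p : ℝ × (Fin n → ℝ) => (1-lam) * (p.1 * p.2 k) := by
          funext p; simp; ring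
        rw [e1, e2, lsum_mul_left lam L₁ _, lsum_mul_left (1-lam) L₂ _, hL₁rec k, hL₂rec k]
        by_cases hki : k = i
        · subst hki
          rw [hw₁i, hw₂i]
          generalize (if 0 < u k then (1:ℝ) else -1) = S
          rw [hlam1, hlam]
          field_simp
          ring
        by_cases hkj : k = j
        · subst hkj
          rw [hw₁j, hw₂j]
          generalize (if 0 < u k then (1:ℝ) else -1) = S
          rw [hlam1, hlam]
          field_simp
          ring
        · rw [hw₁k k hki hkj, hw₂k k hkj hki]
          ring

noncomputable def Qv {m n : ℕ} (A : Matrix (Fin m) (Fin n) ℝ) (z : Fin n → ℝ) : ℝ :=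
  ∑ i, (A *ᵥ z) i ^ 2
noncomputable def Bv {m n : ℕ} (A : Matrix (Fin m) (Fin n) ℝ) (x y : Fin n → ℝ) : ℝ :=
  ∑ i, (A *ᵥ x) i * (A *ᵥ y) i

lemma Qv_comb {m n : ℕ} (A : Matrix (Fin m) (Fin n) ℝ) (x y : Fin n → ℝ) (a b : ℝ) :
    Qv A (a • x + b • y) = a^2 * Qv A x + 2*a*b * Bv A x y + b^2 * Qv A y := by
  unfold Qv Bv
  have h : ∀ i, (A *ᵥ (a • x + b • y)) i = a * (A *ᵥ x) i + b * (A *ᵥ y) i := by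
    intro i
    simp [Matrix.mulVec_add, Matrix.mulVec_smul]
  calc ∑ i, (A *ᵥ (a•x+b•y)) i ^2
      = ∑ i, (a^2 * (A*ᵥx) i^2 + (2*a*b) * ((A*ᵥx) i * (A*ᵥy) i) + b^2 * (A*ᵥy) i^2) := by
        refine Finset.sum_congr rfl fun i _ => ?_
        rw [h i]; ring
  _ = _ := by
        rw [Finset.sum_add_distrib, Finset.sum_add_distrib, ← Finset.mul_sum, ← Finset.mul_sum,
          ← Finset.mul_sum]

lemma Bv_add {m n : ℕ} (A : Matrix (Fin m) (Fin n) ℝ) (x y z : Fin n → ℝ) :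
    Bv A x (y + z) = Bv A x y + Bv A x z := by
  unfold Bv
  rw [← Finset.sum_add_distrib]
  refine Finset.sum_congr rfl fun i _ => ?_
  rw [Matrix.mulVec_add]
  simp [mul_add]

lemma Bv_smul {m n : ℕ} (A : Matrix (Fin m) (Fin n) ℝ) (x y : Fin n → ℝ) (c : ℝ) :
    Bv A x (c • y) = c * Bv A x y := by
  unfold Bv
  rw [Finset.mul_sum]
  refine Finset.sum_congr rfl fun i _ => ?_
  rw [Matrix.mulVec_smul]
  simp
  ring

lemma Bv_self {m n : ℕ} (A : Matrix (Fin m) (Fin n) ℝ) (x : Fin n → ℝ) :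
    Bv A x x = Qv A x := by
  unfold Bv Qv
  exact Finset.sum_congr rfl fun i _ => (sq ((A *ᵥ x) i)).symm

lemma Bv_list {m n : ℕ} (A : Matrix (Fin m) (Fin n) ℝ) (x : Fin n → ℝ) :
    ∀ (L : List (ℝ × (Fin n → ℝ))) (u : Fin n → ℝ),
      (∀ i, (L.map fun p => p.1 * p.2 i).sum = u i) →
      (L.map fun p => p.1 * Bv A x p.2).sum = Bv A x u := by
  intro L
  induction L with
  | nil =>
    intro u hu
    have hu0 : u = 0 := by
      funext i
      have := hu i
      simpa using this.symm
    subst hu0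
    simp [Bv, Matrix.mulVec_zero]
  | cons p tl ih =>
    intro u hu
    set u' : Fin n → ℝ := fun i => u i - p.1 * p.2 i with hu'def
    have hu' : ∀ i, (tl.map fun q => q.1 * q.2 i).sum = u' i := by
      intro i
      have := hu i
      simp only [List.map_cons, List.sum_cons] at this
      simp [hu'def]
      linarith
    have hdecomp : u = p.1 • p.2 + u' := by
      funext i
      simp [hu'def]
    rw [hdecomp, Bv_add, Bv_smul]
    simp only [List.map_cons, List.sum_cons]
    rw [ih u' hu']

lemma lsum_mul_left' {α : Type*} (c : ℝ) (L : List α) (f : α → ℝ) :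
    (L.map fun p => c * f p).sum = c * (L.map f).sum := by
  induction L with
  | nil => simp
  | cons a tl ih => simp [ih]; ring

lemma lsum_lin3 {n : ℕ} (L : List (ℝ × (Fin n → ℝ))) (c d e : ℝ)
    (F G : (Fin n → ℝ) → ℝ) :
    (L.map fun p => p.1 * (c + d * F p.2 + e * G p.2)).sum
      = c * (L.map Prod.fst).sum + d * (L.map fun p => p.1 * F p.2).sum
        + e * (L.map fun p => p.1 * G p.2).sum := by
  induction L with
  | nil => simp
  | cons a tl ih =>
    simp only [List.map_cons, List.sum_cons, ih]
    ring

lemma lsum_le' {α : Type*} (L : List α) (f g : α → ℝ) (h : ∀ a ∈ L, f a ≤ g a) :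
    (L.map f).sum ≤ (L.map g).sum := by
  induction L with
  | nil => simp
  | cons a tl ih =>
    simp only [List.map_cons, List.sum_cons]
    exact add_le_add (h a (by simp)) (ih fun b hb => h b (by simp [hb]))

lemma lsum_congr {α : Type*} (L : List α) (f g : α → ℝ) (h : ∀ a ∈ L, f a = g a) :
    (L.map f).sum = (L.map g).sum := by
  rw [List.map_congr_left h]

lemma split_sq {n : ℕ} (x y : Fin n → ℝ) (hd : ∀ i, x i * y i = 0) (a b : ℝ) :
    ∑ i, (a * x i + b * y i)^2 = a^2 * ∑ i, x i^2 + b^2 * ∑ i, y i^2 := by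
  rw [Finset.mul_sum, Finset.mul_sum, ← Finset.sum_add_distrib]
  refine Finset.sum_congr rfl fun i _ => ?_
  have h := hd i
  linear_combination (2*a*b) * h

set_option maxHeartbeats 1600000 in
lemma nsp {m n : ℕ} (s : ℕ) (hs : 1 ≤ s) (hsn : s ≤ n)
    (A : Matrix (Fin m) (Fin n) ℝ) (δ : ℝ) (hδ0 : 0 ≤ δ) (hδ2 : δ^2 < 1/2)
    (hRl : ∀ z : Fin n → ℝ, (spt z).card ≤ 2*s → (1 - δ) * ∑ i, z i ^ 2 ≤ ∑ i, (A *ᵥ z) i ^ 2)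
    (hRu : ∀ z : Fin n → ℝ, (spt z).card ≤ 2*s → ∑ i, (A *ᵥ z) i ^ 2 ≤ (1 + δ) * ∑ i, z i ^ 2)
    (T : Finset (Fin n)) (hT : T.card ≤ s) (h : Fin n → ℝ)
    (hker : A *ᵥ h = 0) (hne : h ≠ 0) :
    ∑ i ∈ T, |h i| < ∑ i ∈ Tᶜ, |h i| := by
  classical
  by_contra hcon
  push_neg at hcon
  have hs0 : (0:ℝ) < s := by exact_mod_cast hs
  -- maximal T₀
  have hpow : (Finset.powersetCard s (univ : Finset (Fin n))).Nonempty := by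
    rw [Finset.powersetCard_nonempty]
    simpa using hsn
  obtain ⟨T₀, hT₀mem, hT₀max⟩ := Finset.exists_max_image _ (fun S => ∑ i ∈ S, |h i|) hpow
  have hT₀card : T₀.card = s := (Finset.mem_powersetCard.1 hT₀mem).2
  have hswap : ∀ i ∈ T₀, ∀ j ∉ T₀, |h j| ≤ |h i| := by
    intro i hi j hj
    by_contra hlt
    push_neg at hlt
    have hjer : j ∉ T₀.erase i := fun hmem => hj (Finset.erase_subset _ _ hmem)
    have hScard : (insert j (T₀.erase i)).card = s := by
      rw [Finset.card_insert_of_notMem hjer, Finset.card_erase_of_mem hi, hT₀card]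
      omega
    have hSmem : insert j (T₀.erase i) ∈ Finset.powersetCard s univ :=
      Finset.mem_powersetCard.2 ⟨Finset.subset_univ _, hScard⟩
    have h1 : |h i| + ∑ k ∈ T₀.erase i, |h k| = ∑ k ∈ T₀, |h k| :=
      Finset.add_sum_erase T₀ (fun k => |h k|) hi
    have hsum : ∑ k ∈ T₀, |h k| < ∑ k ∈ insert j (T₀.erase i), |h k| := by
      rw [Finset.sum_insert hjer]
      linarith
    exact absurd (hT₀max _ hSmem) (not_le.2 hsum)
  have hsumT : ∑ i ∈ T, |h i| ≤ ∑ i ∈ T₀, |h i| := by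
    obtain ⟨T₂, hTT₂, hT₂u, hT₂card⟩ :=
      Finset.exists_subsuperset_card_eq (Finset.subset_univ T) hT (by simpa using hsn)
    calc ∑ i ∈ T, |h i| ≤ ∑ i ∈ T₂, |h i| :=
          Finset.sum_le_sum_of_subset_of_nonneg hTT₂ (fun i _ _ => abs_nonneg _)
    _ ≤ _ := hT₀max T₂ (Finset.mem_powersetCard.2 ⟨Finset.subset_univ _, hT₂card⟩)
  set θ : ℝ := (∑ i ∈ T₀, |h i|) / s with hθdef
  have hT₀nonneg : 0 ≤ ∑ i ∈ T₀, |h i| := Finset.sum_nonneg fun i _ => abs_nonneg _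
  have hθ0 : 0 ≤ θ := div_nonneg hT₀nonneg hs0.le
  have hsθ : (s:ℝ) * θ = ∑ i ∈ T₀, |h i| := by
    rw [hθdef]; field_simp
  have hinfty : ∀ j, j ∉ T₀ → |h j| ≤ θ := by
    intro j hj
    have h2 : (s:ℝ) * |h j| ≤ ∑ i ∈ T₀, |h i| := by
      calc (s:ℝ)*|h j| = ∑ _i ∈ T₀, |h j| := by rw [Finset.sum_const, hT₀card, nsmul_eq_mul]
      _ ≤ _ := Finset.sum_le_sum (fun i hi => hswap i hi j hj)
    rw [← hsθ] at h2
    exact le_of_mul_le_mul_left h2 hs0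
  have hcompl : ∀ (S : Finset (Fin n)), ∑ i ∈ Sᶜ, |h i| = ∑ i, |h i| - ∑ i ∈ S, |h i| := by
    intro S
    have := Finset.sum_add_sum_compl S (fun i => |h i|)
    linarith
  have hTc0 : ∑ i ∈ T₀ᶜ, |h i| ≤ (s:ℝ) * θ := by
    rw [hcompl, hsθ]
    have h3 := hcompl T
    linarith
  set x : Fin n → ℝ := fun i => if i ∈ T₀ then h i else 0 with hxdef
  set u : Fin n → ℝ := fun i => if i ∈ T₀ then 0 else h i with hudef
  have hxu : ∀ i, h i = x i + u i := by
    intro i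
    by_cases hi : i ∈ T₀ <;> simp [hxdef, hudef, hi]
  have hub : ∀ i, |u i| ≤ θ := by
    intro i
    by_cases hi : i ∈ T₀
    · simp [hudef, hi, hθ0]
    · simp only [hudef, if_neg hi]
      exact hinfty i hi
  have hu1 : ∑ i, |u i| ≤ s * θ := by
    have hsplit := Finset.sum_add_sum_compl T₀ (fun i => |u i|)
    have hz : ∑ i ∈ T₀, |u i| = 0 := by
      apply Finset.sum_eq_zero
      intro i hi
      simp [hudef, hi]
    have hcc : ∑ i ∈ T₀ᶜ, |u i| = ∑ i ∈ T₀ᶜ, |h i| := by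
      refine Finset.sum_congr rfl fun i hi => ?_
      rw [Finset.mem_compl] at hi
      simp [hudef, hi]
    calc ∑ i, |u i| = ∑ i ∈ T₀, |u i| + ∑ i ∈ T₀ᶜ, |u i| := hsplit.symm
    _ = ∑ i ∈ T₀ᶜ, |h i| := by rw [hz, hcc]; ring
    _ ≤ s * θ := hTc0
  obtain ⟨L, hLsum, hLmem, hLrec⟩ := decomp s hs θ (msr θ u) u le_rfl hub hu1
  set μ : ℝ := (1+δ)/(2+3*δ) with hμdef
  have hden : (0:ℝ) < 2+3*δ := by linarith
  set X2 : ℝ := ∑ i, x i^2 with hX2def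
  have hX2nonneg : 0 ≤ X2 := Finset.sum_nonneg fun i _ => sq_nonneg _
  -- disjointness
  have hdisj : ∀ p ∈ L, ∀ i, x i * p.2 i = 0 := by
    intro p hp i
    by_cases hi : i ∈ T₀
    · have hu0 : u i = 0 := by simp [hudef, hi]
      rw [(hLmem p hp).2.2.2 i hu0, mul_zero]
    · simp [hxdef, hi]
  -- apply RIP pointwise
  have hsptx : ∀ (a b : ℝ) (p : ℝ × (Fin n → ℝ)), p ∈ L → (spt (a • x + b • p.2)).card ≤ 2*s := by
    intro a b p hp
    have hsub : spt (a • x + b • p.2) ⊆ T₀ ∪ spt p.2 := by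
      intro i hi
      rw [mem_spt] at hi
      by_cases hT₀i : i ∈ T₀
      · exact Finset.mem_union_left _ hT₀i
      · refine Finset.mem_union_right _ (mem_spt.2 fun hz => hi ?_)
        have hx0 : x i = 0 := by simp [hxdef, hT₀i]
        simp [hx0, hz]
    calc (spt (a • x + b • p.2)).card ≤ (T₀ ∪ spt p.2).card := Finset.card_le_card hsub
    _ ≤ T₀.card + (spt p.2).card := Finset.card_union_le _ _
    _ ≤ 2*s := by
        have := (hLmem p hp).2.1
        omega
  have hsum_comb : ∀ (a b : ℝ) (p : ℝ × (Fin n → ℝ)), p ∈ L →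
      ∑ i, (a • x + b • p.2) i ^2 = a^2 * X2 + b^2 * ∑ i, p.2 i ^2 := by
    intro a b p hp
    have := split_sq x p.2 (hdisj p hp) a b
    rw [hX2def]
    rw [← this]
    refine Finset.sum_congr rfl fun i _ => ?_
    simp
  have hRIPl : ∀ p ∈ L, (1-δ) * (X2 + μ^2 * ∑ i, p.2 i ^2) ≤ Qv A ((1:ℝ) • x + μ • p.2) := by
    intro p hp
    have h4 := hRl _ (hsptx 1 μ p hp)
    rw [hsum_comb 1 μ p hp] at h4
    calc (1-δ) * (X2 + μ^2 * ∑ i, p.2 i ^2)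
        = (1-δ) * (1^2 * X2 + μ^2 * ∑ i, p.2 i ^2) := by ring
    _ ≤ _ := h4
  have hRIPu : ∀ p ∈ L, Qv A ((2*μ-1) • x + μ • p.2)
      ≤ (1+δ) * ((2*μ-1)^2 * X2 + μ^2 * ∑ i, p.2 i ^2) := by
    intro p hp
    have h4 := hRu _ (hsptx (2*μ-1) μ p hp)
    rw [hsum_comb (2*μ-1) μ p hp] at h4
    exact h4
  -- B x u = - Qv x
  have hBxh : Bv A x h = 0 := by
    unfold Bv
    rw [hker]
    simp
  have hBxu : Bv A x u = - Qv A x := by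
    have h5 : Bv A x h = Bv A x x + Bv A x u := by
      rw [show h = x + u from funext hxu]  -- careful: h both name; rename
      exact Bv_add A x x u
    rw [hBxh, Bv_self] at h5
    linarith
  have hSB : (L.map fun p => p.1 * Bv A x p.2).sum = - Qv A x := by
    rw [Bv_list A x L u hLrec, hBxu]
  set SY : ℝ := (L.map fun p => p.1 * ∑ i, p.2 i^2).sum with hSYdef
  set SQ : ℝ := (L.map fun p => p.1 * Qv A p.2).sum with hSQdef
  have hLnonneg : ∀ p ∈ L, 0 ≤ p.1 := fun p hp => (hLmem p hp).1
  -- chain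
  have hmid1 : (L.map fun p => p.1 * Qv A ((1:ℝ) • x + μ • p.2)).sum
      = Qv A x + 2*μ*(- Qv A x) + μ^2 * SQ := by
    rw [lsum_congr L _ (fun p => p.1 * (Qv A x + (2*μ) * Bv A x p.2 + μ^2 * Qv A p.2))
      (fun p _ => by rw [Qv_comb]; ring)]
    rw [lsum_lin3 L (Qv A x) (2*μ) (μ^2) (Bv A x) (Qv A), hLsum, hSB]
    ring
  have hmid2 : (L.map fun p => p.1 * Qv A ((2*μ-1) • x + μ • p.2)).sum
      = (2*μ-1)^2 * Qv A x + 2*(2*μ-1)*μ*(- Qv A x) + μ^2 * SQ := by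
    rw [lsum_congr L _ (fun p => p.1 * ((2*μ-1)^2 * Qv A x + (2*(2*μ-1)*μ) * Bv A x p.2 + μ^2 * Qv A p.2))
      (fun p _ => by rw [Qv_comb])]
    rw [lsum_lin3 L ((2*μ-1)^2 * Qv A x) (2*(2*μ-1)*μ) (μ^2) (Bv A x) (Qv A), hLsum, hSB]
    ring
  have hchain1 : (1-δ) * (X2 + μ^2 * SY)
      ≤ (L.map fun p => p.1 * Qv A ((1:ℝ) • x + μ • p.2)).sum := by
    have e1 : (1-δ) * (X2 + μ^2 * SY)
        = (L.map fun p => p.1 * ((1-δ)*X2 + ((1-δ)*μ^2) * (∑ i, p.2 i^2) + 0 * Qv A p.2)).sum := by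
      rw [lsum_lin3 L ((1-δ)*X2) ((1-δ)*μ^2) 0 (fun y => ∑ i, y i^2) (Qv A), hLsum, ← hSYdef]
      ring
    rw [e1]
    apply lsum_le'
    intro p hp
    have := hRIPl p hp
    have h0 := hLnonneg p hp
    calc p.1 * ((1-δ)*X2 + ((1-δ)*μ^2) * (∑ i, p.2 i^2) + 0 * Qv A p.2)
        = p.1 * ((1-δ) * (X2 + μ^2 * ∑ i, p.2 i ^2)) := by ring
    _ ≤ p.1 * Qv A ((1:ℝ) • x + μ • p.2) := mul_le_mul_of_nonneg_left this h0
  have hchain2 : (L.map fun p => p.1 * Qv A ((2*μ-1) • x + μ • p.2)).sum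
      ≤ (1+δ) * ((2*μ-1)^2 * X2 + μ^2 * SY) := by
    have e1 : (1+δ) * ((2*μ-1)^2 * X2 + μ^2 * SY)
        = (L.map fun p => p.1 * ((1+δ)*(2*μ-1)^2*X2 + ((1+δ)*μ^2) * (∑ i, p.2 i^2) + 0 * Qv A p.2)).sum := by
      rw [lsum_lin3 L ((1+δ)*(2*μ-1)^2*X2) ((1+δ)*μ^2) 0 (fun y => ∑ i, y i^2) (Qv A), hLsum, ← hSYdef]
      ring
    rw [e1]
    apply lsum_le'
    intro p hp
    have := hRIPu p hp
    have h0 := hLnonneg p hp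
    calc p.1 * Qv A ((2*μ-1) • x + μ • p.2)
        ≤ p.1 * ((1+δ) * ((2*μ-1)^2 * X2 + μ^2 * ∑ i, p.2 i ^2)) := mul_le_mul_of_nonneg_left this h0
    _ = p.1 * ((1+δ)*(2*μ-1)^2*X2 + ((1+δ)*μ^2) * (∑ i, p.2 i^2) + 0 * Qv A p.2) := by ring
  have hkey : (1-δ) * (X2 + μ^2 * SY) ≤ (1+δ) * ((2*μ-1)^2 * X2 + μ^2 * SY) := by
    have hmid_eq : Qv A x + 2*μ*(- Qv A x) + μ^2 * SQ
        = (2*μ-1)^2 * Qv A x + 2*(2*μ-1)*μ*(- Qv A x) + μ^2 * SQ := by ring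
    calc (1-δ) * (X2 + μ^2 * SY) ≤ _ := hchain1
    _ = Qv A x + 2*μ*(- Qv A x) + μ^2 * SQ := hmid1
    _ = (2*μ-1)^2 * Qv A x + 2*(2*μ-1)*μ*(- Qv A x) + μ^2 * SQ := hmid_eq
    _ = (L.map fun p => p.1 * Qv A ((2*μ-1) • x + μ • p.2)).sum := hmid2.symm
    _ ≤ _ := hchain2
  -- SY bounds
  have hSY0 : 0 ≤ SY := by
    rw [hSYdef]
    apply List.sum_nonneg
    intro a ha
    rw [List.mem_map] at ha
    obtain ⟨p, hp, rfl⟩ := ha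
    exact mul_nonneg (hLnonneg p hp) (Finset.sum_nonneg fun i _ => sq_nonneg _)
  have hsθ2X : (s:ℝ) * θ^2 ≤ X2 := by
    have hCS : (∑ i ∈ T₀, |h i|)^2 ≤ T₀.card * ∑ i ∈ T₀, |h i|^2 := sq_sum_le_card_mul_sum_sq
    have hX2eq : X2 = ∑ i ∈ T₀, h i^2 := by
      rw [hX2def]
      rw [Finset.sum_congr rfl (fun i (_ : i ∈ univ) =>
        show x i^2 = if i ∈ T₀ then h i^2 else 0 from by
          by_cases hi : i ∈ T₀ <;> simp [hxdef, hi])]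
      rw [Finset.sum_ite_mem, Finset.univ_inter]
    have habs2 : ∑ i ∈ T₀, |h i|^2 = ∑ i ∈ T₀, h i^2 :=
      Finset.sum_congr rfl fun i _ => sq_abs _
    rw [hT₀card] at hCS
    rw [hX2eq]
    rw [habs2] at hCS
    have hθs : θ * (s:ℝ) = ∑ i ∈ T₀, |h i| := by rw [hθdef]; field_simp
    nlinarith [hCS, hθs, hs0, sq_nonneg θ]
  have hSYb : SY ≤ X2 := by
    have hSYs : SY ≤ (s:ℝ) * θ^2 := by
      have hstep : ∀ p ∈ L, p.1 * (∑ i, p.2 i^2) ≤ p.1 * ((s:ℝ)*θ^2) := by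
        intro p hp
        apply mul_le_mul_of_nonneg_left _ (hLnonneg p hp)
        have hsum_spt : ∑ i, p.2 i^2 = ∑ i ∈ spt p.2, p.2 i^2 := by
          symm
          apply Finset.sum_subset (Finset.subset_univ _)
          intro i _ hi
          rw [mem_spt, not_not] at hi
          simp [hi]
        rw [hsum_spt]
        have hsq : ∀ i ∈ spt p.2, p.2 i^2 ≤ θ^2 := by
          intro i _
          have := (hLmem p hp).2.2.1 i
          nlinarith [abs_nonneg (p.2 i), sq_abs (p.2 i)]
        calc ∑ i ∈ spt p.2, p.2 i^2 ≤ (spt p.2).card * θ^2 := by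
              have := Finset.sum_le_card_nsmul (spt p.2) (fun i => p.2 i^2) (θ^2) hsq
              simpa [nsmul_eq_mul] using this
        _ ≤ (s:ℝ) * θ^2 := by
              have hcard := (hLmem p hp).2.1
              have : ((spt p.2).card : ℝ) ≤ (s:ℝ) := by exact_mod_cast hcard
              nlinarith [sq_nonneg θ]
      calc SY ≤ (L.map fun p => p.1 * ((s:ℝ)*θ^2)).sum := lsum_le' L _ _ hstep
      _ = (s:ℝ)*θ^2 := by
          rw [lsum_congr L _ (fun p => ((s:ℝ)*θ^2) * p.1) (fun p _ => by ring),
            lsum_mul_left' ((s:ℝ)*θ^2) L Prod.fst, hLsum, mul_one]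
    linarith
  -- positivity of the quadratic coefficient
  have hcoef : ((1-δ) - (1+δ)*(2*μ-1)^2 - 2*δ*μ^2) * (2+3*δ)^2 = (2+3*δ)*(2-4*δ^2) := by
    rw [hμdef]
    field_simp
    ring
  have hc : 0 < (1-δ) - (1+δ)*(2*μ-1)^2 - 2*δ*μ^2 := by
    have hQ : 0 < (2+3*δ)*(2-4*δ^2) := mul_pos hden (by nlinarith)
    by_contra hle
    push_neg at hle
    have h6 : ((1-δ) - (1+δ)*(2*μ-1)^2 - 2*δ*μ^2) * (2+3*δ)^2 ≤ 0 :=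
      mul_nonpos_of_nonpos_of_nonneg hle (sq_nonneg _)
    rw [hcoef] at h6
    linarith
  have h2b : 2*δ*μ^2*SY ≤ 2*δ*μ^2*X2 := by
    apply mul_le_mul_of_nonneg_left hSYb
    positivity
  have h3 : ((1-δ) - (1+δ)*(2*μ-1)^2 - 2*δ*μ^2) * X2 ≤ 0 := by nlinarith [hkey, h2b]
  have hX2le : X2 ≤ 0 := by nlinarith [h3, hc]
  have hX2z : X2 = 0 := le_antisymm hX2le hX2nonneg
  -- conclude h = 0
  have hT₀zero : ∀ i ∈ T₀, h i = 0 := by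
    intro i hi
    have hall := (Finset.sum_eq_zero_iff_of_nonneg (fun j (_ : j ∈ univ) => sq_nonneg (x j))).1
      (hX2def ▸ hX2z) i (Finset.mem_univ i)
    have hx0 : x i = 0 := by
      have := sq_eq_zero_iff.1 hall
      exact this
    rw [hxdef] at hx0
    simpa [hi] using hx0
  have hθz : θ = 0 := by
    have : ∑ i ∈ T₀, |h i| = 0 := Finset.sum_eq_zero fun i hi => by rw [hT₀zero i hi]; simp
    rw [hθdef, this]
    simp
  apply hne
  funext i
  by_cases hi : i ∈ T₀
  · exact hT₀zero i hi
  · have := hinfty i hi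
    rw [hθz] at this
    have := abs_nonpos_iff.1 this  -- check name
    exact this

lemma kappa_exists {n : ℕ} (V : Submodule ℝ (Fin n → ℝ)) (f : V →ₗ[ℝ] ℝ)
    (hf : ∀ x : V, x ≠ 0 → |f x| < ∑ i, |(x : Fin n → ℝ) i|) :
    ∃ κ : ℝ, 0 ≤ κ ∧ κ < 1 ∧ ∀ x : V, |f x| ≤ κ * ∑ i, |(x : Fin n → ℝ) i| := by
  classical
  obtain ⟨C, hC⟩ := Submodule.exists_isCompl V
  set g : (Fin n → ℝ) →ₗ[ℝ] ℝ := f.comp (V.projectionOnto C hC) with hg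
  have hgV : ∀ x : V, g x = f x := by
    intro x
    simp [hg, Submodule.projectionOnto_apply_left hC x]
  have hgc : Continuous g := g.continuous_of_finiteDimensional
  set nrm : (Fin n → ℝ) → ℝ := fun x => ∑ i, |x i| with hnrm
  have hsingle : ∀ (x : Fin n → ℝ) (i : Fin n), |x i| ≤ nrm x := by
    intro x i
    simpa [hnrm] using Finset.single_le_sum (f := fun j => |x j|) (fun j _ => abs_nonneg _) (mem_univ i)
  have hnc : Continuous nrm := by
    apply continuous_finset_sum
    intro i _
    exact (continuous_apply i).abs
  have hn0 : ∀ x, 0 ≤ nrm x := fun x => Finset.sum_nonneg fun i _ => abs_nonneg _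
  have hnpos : ∀ x : Fin n → ℝ, x ≠ 0 → 0 < nrm x := by
    intro x hx
    rcases Function.ne_iff.1 hx with ⟨i, hi⟩
    calc (0:ℝ) < |x i| := abs_pos.2 hi
    _ ≤ nrm x := hsingle x i
  have hsmul : ∀ (x : Fin n → ℝ) (c : ℝ), 0 ≤ c → nrm (c • x) = c * nrm x := by
    intro x c hc
    simp only [hnrm, Pi.smul_apply, smul_eq_mul, abs_mul, abs_of_nonneg hc, ← Finset.mul_sum]
  set S : Set (Fin n → ℝ) := {x | x ∈ V ∧ nrm x = 1} with hS
  have hmemS : ∀ x : V, (x : Fin n → ℝ) ≠ 0 → ((nrm (x:Fin n → ℝ))⁻¹ • (x : Fin n → ℝ)) ∈ S := by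
    intro x hx0
    have hpos := hnpos _ hx0
    constructor
    · exact Submodule.smul_mem V _ x.2
    · rw [hsmul _ _ (le_of_lt (inv_pos.2 hpos))]
      exact inv_mul_cancel₀ (ne_of_gt hpos)
  by_cases hSe : S = ∅
  · refine ⟨0, le_refl _, by norm_num, ?_⟩
    intro x
    by_cases hx : x = 0
    · simp [hx]
    · exfalso
      have hx0 : (x : Fin n → ℝ) ≠ 0 := fun h => hx (Subtype.ext h)
      have hmem := hmemS x hx0
      rw [hSe] at hmem
      exact hmem
  · have hScomp : IsCompact S := by
      apply Metric.isCompact_of_isClosed_isBounded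
      · exact IsClosed.inter (Submodule.closed_of_finiteDimensional V)
          (isClosed_eq hnc continuous_const)
      · apply Metric.isBounded_iff_subset_closedBall (0 : Fin n → ℝ) |>.2
        refine ⟨1, fun x hx => ?_⟩
        simp only [Metric.mem_closedBall, dist_zero_right]
        apply pi_norm_le_iff_of_nonneg (by norm_num : (0:ℝ) ≤ 1) |>.2
        intro i
        rw [Real.norm_eq_abs]
        calc |x i| ≤ nrm x := hsingle x i
        _ = 1 := hx.2
    obtain ⟨x₀, hx₀⟩ := Set.nonempty_iff_ne_empty.2 hSe
    obtain ⟨a, haS, hamax⟩ := hScomp.exists_isMaxOn ⟨x₀, hx₀⟩ (hgc.abs.continuousOn)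
    set κ := |g a| with hκ
    have hκ0 : 0 ≤ κ := abs_nonneg _
    have haV : a ∈ V := haS.1
    have haneq : (⟨a, haV⟩ : V) ≠ 0 := by
      intro hcontra
      have ha0 : a = 0 := congrArg Subtype.val hcontra
      have h1 := haS.2
      rw [ha0] at h1
      simp [hnrm] at h1
    have hκ1 : κ < 1 := by
      have := hf ⟨a, haV⟩ haneq
      rw [← hgV ⟨a, haV⟩] at this
      calc κ = |g a| := rfl
      _ < ∑ i, |a i| := this
      _ = 1 := haS.2
    refine ⟨κ, hκ0, hκ1, ?_⟩
    intro x
    by_cases hx : x = 0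
    · simp [hx]
    · have hx0 : (x : Fin n → ℝ) ≠ 0 := fun h => hx (Subtype.ext h)
      have hpos := hnpos _ hx0
      have hmem := hmemS x hx0
      have hle := hamax hmem
      simp only [Set.mem_setOf_eq] at hle
      have h2 : |g ((nrm (x:Fin n → ℝ))⁻¹ • (x : Fin n → ℝ))| ≤ κ := hle
      rw [_root_.map_smul, smul_eq_mul, abs_mul, abs_inv, abs_of_pos hpos] at h2
      have h3 : |g (x : Fin n → ℝ)| ≤ κ * nrm (x : Fin n → ℝ) := by
        rw [inv_mul_le_iff₀ hpos] at h2
        linarith [h2]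
      rw [hgV x] at h3
      exact h3

lemma range_transpose {m n : ℕ} (A : Matrix (Fin m) (Fin n) ℝ) (η : Fin n → ℝ)
    (hperp : ∀ h : Fin n → ℝ, A *ᵥ h = 0 → ∑ i, η i * h i = 0) :
    ∃ w : Fin m → ℝ, Aᵀ *ᵥ w = η := by
  classical
  set e := WithLp.linearEquiv 2 ℝ (Fin n → ℝ) with he
  set R : Submodule ℝ (EuclideanSpace ℝ (Fin n)) :=
    (LinearMap.range (Matrix.mulVecLin Aᵀ)).comap e.toLinearMap with hR
  set η' : EuclideanSpace ℝ (Fin n) := e.symm η with hη'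
  have inner_eq : ∀ a b : EuclideanSpace ℝ (Fin n), (inner ℝ a b : ℝ) = ∑ i, e a i * e b i := by
    intro a b
    simp [PiLp.inner_apply, RCLike.inner_apply, e, mul_comm]
  set z : EuclideanSpace ℝ (Fin n) := η' - (R.orthogonalProjectionOnto η' : EuclideanSpace ℝ (Fin n)) with hzdef
  have hz : z ∈ Rᗮ := R.sub_starProjection_mem_orthogonal η'
  have hAz : A *ᵥ (e z) = 0 := by
    funext j
    have hw : ∀ w : Fin m → ℝ, ∑ i, (Aᵀ *ᵥ w) i * (e z) i = 0 := by
      intro w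
      have hmem : e.symm (Aᵀ *ᵥ w) ∈ R := by
        simp only [hR, Submodule.mem_comap]
        exact ⟨w, by simp [Matrix.mulVec_transpose]⟩
      have h2 := (Submodule.mem_orthogonal R z).1 hz _ hmem
      rw [inner_eq] at h2
      simpa using h2
    have h3 := hw (Pi.single j 1)
    have h4 : ∑ i, (Aᵀ *ᵥ Pi.single j 1) i * (e z) i = (A *ᵥ (e z)) j := by
      rw [show Aᵀ *ᵥ (Pi.single j 1) = (Pi.single j 1 : Fin m → ℝ) ᵥ* A from Matrix.mulVec_transpose A _]
      rw [show ∑ i, ((Pi.single j 1 : Fin m → ℝ) ᵥ* A) i * (e z) i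
            = ((Pi.single j 1 : Fin m → ℝ) ᵥ* A) ⬝ᵥ (e z) from rfl]
      rw [← Matrix.dotProduct_mulVec]
      simp [dotProduct, Pi.single_apply]
    rw [h4] at h3
    simp [h3]
  have h7 : (inner ℝ z z : ℝ) = 0 := by
    have h5 : (inner ℝ η' z : ℝ) = 0 := by
      rw [inner_eq]
      simpa [hη', e] using hperp (e z) hAz
    have h6 : (inner ℝ (R.orthogonalProjectionOnto η' : EuclideanSpace ℝ (Fin n)) z : ℝ) = 0 :=
      (Submodule.mem_orthogonal R z).1 hz _ (R.orthogonalProjectionOnto η').2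
    rw [hzdef, inner_sub_left, h5, h6]
    ring
  have hzero : z = 0 := inner_self_eq_zero.1 h7
  have hmem : η' ∈ R := by
    have h9 : η' - (R.orthogonalProjectionOnto η' : EuclideanSpace ℝ (Fin n)) = 0 := by
      rw [← hzdef, hzero]
    rw [sub_eq_zero.1 h9]; exact (R.orthogonalProjectionOnto η').2
  obtain ⟨w, hw⟩ := (Submodule.mem_comap.1 hmem)
  refine ⟨w, ?_⟩
  have h10 : Matrix.mulVecLin Aᵀ w = e η' := hw
  rw [hη', e.apply_symm_apply] at h10
  exact h10

-- continuation lemma: given NSP and injectivity, produce certificate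
set_option maxHeartbeats 1600000 in
lemma certificate {m n : ℕ} (A : Matrix (Fin m) (Fin n) ℝ) (v : Fin n → ℝ)
    (T : Finset (Fin n)) (hmemT : ∀ i, i ∈ T ↔ v i ≠ 0)
    (hinj : ∀ z : Fin n → ℝ, (∀ i, v i = 0 → z i = 0) → A *ᵥ z = 0 → z = 0)
    (hNSP : ∀ h : Fin n → ℝ, A *ᵥ h = 0 → h ≠ 0 →
      ∑ i ∈ T, |h i| < ∑ i ∈ Tᶜ, |h i|) :
    ∃ w : Fin m → ℝ,
      (∀ i, v i ≠ 0 → (Aᵀ *ᵥ w) i = Real.sign (v i)) ∧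
      (∀ i, v i = 0 → |(Aᵀ *ᵥ w) i| < 1) := by
  classical
  have habs_sign : ∀ t : ℝ, |Real.sign t| ≤ 1 := by
    intro t
    rcases lt_trichotomy t 0 with ht | ht | ht
    · rw [Real.sign_of_neg ht]; norm_num
    · rw [ht, Real.sign_zero]; norm_num
    · rw [Real.sign_of_pos ht]; norm_num
  set Kh : Submodule ℝ (Fin n → ℝ) := LinearMap.ker (Matrix.mulVecLin A) with hKhdef
  have hmemKh : ∀ h : Fin n → ℝ, h ∈ Kh ↔ A *ᵥ h = 0 := by
    intro h
    simp [hKhdef, LinearMap.mem_ker]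
  set π : (Fin n → ℝ) →ₗ[ℝ] (Fin n → ℝ) :=
    { toFun := fun h i => if v i = 0 then h i else 0
      map_add' := by intro a b; funext i; by_cases hi : v i = 0 <;> simp [hi]
      map_smul' := by intro c a; funext i; by_cases hi : v i = 0 <;> simp [hi] } with hπdef
  have hπ_apply : ∀ (h : Fin n → ℝ) (i : Fin n), π h i = if v i = 0 then h i else 0 :=
    fun h i => rfl
  set φ : (Fin n → ℝ) →ₗ[ℝ] ℝ :=
    { toFun := fun h => -∑ i ∈ T, Real.sign (v i) * h i
      map_add' := by
        intro a b
        simp only [Pi.add_apply, mul_add]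
        rw [Finset.sum_add_distrib]
        ring
      map_smul' := by
        intro c a
        simp only [Pi.smul_apply, smul_eq_mul, RingHom.id_apply]
        rw [show ∑ i ∈ T, Real.sign (v i) * (c * a i)
            = c * ∑ i ∈ T, Real.sign (v i) * a i from by
          rw [Finset.mul_sum]
          exact Finset.sum_congr rfl fun i _ => by ring]
        ring } with hφdef
  have hφ_apply : ∀ h : Fin n → ℝ, φ h = -∑ i ∈ T, Real.sign (v i) * h i := fun h => rfl
  have F1 : ∀ h : Fin n → ℝ, h ∈ Kh → π h = 0 → h = 0 := by
    intro h hh hπh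
    refine hinj h (fun i hi => ?_) ((hmemKh h).1 hh)
    have := congrFun hπh i
    rw [hπ_apply, if_pos hi] at this
    exact this
  set V : Submodule ℝ (Fin n → ℝ) := Kh.map π with hVdef
  set ψ : Kh →ₗ[ℝ] V := LinearMap.codRestrict V (π.comp Kh.subtype)
    (fun c => Submodule.mem_map_of_mem c.2) with hψdef
  have hψcoe : ∀ hK : Kh, ((ψ hK : V) : Fin n → ℝ) = π (hK : Fin n → ℝ) := by
    intro hK
    simp [hψdef]
  have hψinj : Function.Injective ψ := by
    intro a b hab
    have hval : π (a : Fin n → ℝ) = π (b : Fin n → ℝ) := by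
      rw [← hψcoe a, ← hψcoe b, hab]
    have hd : π ((a : Fin n → ℝ) - b) = 0 := by rw [map_sub, hval, sub_self]
    have := F1 _ (Kh.sub_mem a.2 b.2) hd
    exact Subtype.ext (by
      have := sub_eq_zero.1 this
      exact this)
  have hψsurj : Function.Surjective ψ := by
    intro y
    obtain ⟨h, hh, hy⟩ := y.2
    exact ⟨⟨h, hh⟩, Subtype.ext (by rw [hψcoe]; exact hy)⟩
  set e : Kh ≃ₗ[ℝ] V := LinearEquiv.ofBijective ψ ⟨hψinj, hψsurj⟩ with hedef
  have hecoe : ∀ hK : Kh, ((e hK : V) : Fin n → ℝ) = π (hK : Fin n → ℝ) := fun hK => hψcoe hK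
  set f : V →ₗ[ℝ] ℝ := φ.comp ((Kh.subtype).comp (e.symm.toLinearMap)) with hfdef
  have hf_eval : ∀ hK : Kh, f (e hK) = φ (hK : Fin n → ℝ) := by
    intro hK
    simp [hfdef]
  -- key bound for f on V
  have hfV : ∀ x : V, x ≠ 0 → |f x| < ∑ i, |(x : Fin n → ℝ) i| := by
    intro x hx
    set hK : Kh := e.symm x with hKdef
    have hxe : e hK = x := e.apply_symm_apply x
    have hcoe2 : (x : Fin n → ℝ) = π (hK : Fin n → ℝ) := by rw [← hxe]; exact hecoe hK
    have hKne : (hK : Fin n → ℝ) ≠ 0 := by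
      intro h0
      apply hx
      rw [← hxe]
      have : hK = 0 := Subtype.ext h0
      rw [this, map_zero]
    have hfx : f x = φ (hK : Fin n → ℝ) := by rw [← hxe, hf_eval]
    have hb1 : |φ (hK : Fin n → ℝ)| ≤ ∑ i ∈ T, |(hK : Fin n → ℝ) i| := by
      rw [hφ_apply, abs_neg]
      calc |∑ i ∈ T, Real.sign (v i) * (hK : Fin n → ℝ) i|
          ≤ ∑ i ∈ T, |Real.sign (v i) * (hK : Fin n → ℝ) i| := Finset.abs_sum_le_sum_abs _ _
      _ ≤ ∑ i ∈ T, |(hK : Fin n → ℝ) i| := by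
          apply Finset.sum_le_sum
          intro i _
          rw [abs_mul]
          calc |Real.sign (v i)| * |(hK : Fin n → ℝ) i|
              ≤ 1 * |(hK : Fin n → ℝ) i| :=
                mul_le_mul_of_nonneg_right (habs_sign _) (abs_nonneg _)
          _ = _ := one_mul _
    have hb2 := hNSP (hK : Fin n → ℝ) ((hmemKh _).1 hK.2) hKne
    have hb3 : ∑ i ∈ Tᶜ, |(hK : Fin n → ℝ) i| = ∑ i, |(x : Fin n → ℝ) i| := by
      rw [hcoe2]
      rw [← Finset.sum_add_sum_compl T (fun i => |π (hK : Fin n → ℝ) i|)]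
      have hTz : ∑ i ∈ T, |π (hK : Fin n → ℝ) i| = 0 := by
        apply Finset.sum_eq_zero
        intro i hi
        rw [hπ_apply, if_neg ((hmemT i).1 hi)]
        simp
      have hTcz : ∑ i ∈ Tᶜ, |π (hK : Fin n → ℝ) i| = ∑ i ∈ Tᶜ, |(hK : Fin n → ℝ) i| := by
        refine Finset.sum_congr rfl fun i hi => ?_
        rw [Finset.mem_compl] at hi
        have hvi : v i = 0 := not_not.1 (fun hne => hi ((hmemT i).2 hne))
        rw [hπ_apply, if_pos hvi]
      rw [hTz, hTcz, zero_add]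
    rw [hfx]
    calc |φ (hK : Fin n → ℝ)| ≤ ∑ i ∈ T, |(hK : Fin n → ℝ) i| := hb1
    _ < ∑ i ∈ Tᶜ, |(hK : Fin n → ℝ) i| := hb2
    _ = _ := hb3
  obtain ⟨κ, hκ0, hκ1, hκb⟩ := kappa_exists V f hfV
  -- Hahn-Banach extension
  set F : LinearPMap (RingHom.id ℝ) (Fin n → ℝ) ℝ := ⟨V, f⟩ with hFdef
  obtain ⟨g, hg_ext, hgN⟩ := exists_extension_of_le_sublinear F (fun x => κ * ∑ i, |x i|)
    (by
      intro c hc x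
      simp only [Pi.smul_apply, smul_eq_mul, abs_mul, abs_of_pos hc]
      rw [← Finset.mul_sum]
      ring)
    (by
      intro x y
      have h1 : ∑ i, |x i + y i| ≤ ∑ i, (|x i| + |y i|) :=
        Finset.sum_le_sum fun i _ => abs_add_le _ _
      rw [Finset.sum_add_distrib] at h1
      have := mul_le_mul_of_nonneg_left h1 hκ0
      calc κ * ∑ i, |(x + y) i| = κ * ∑ i, |x i + y i| := rfl
      _ ≤ κ * (∑ i, |x i| + ∑ i, |y i|) := this
      _ = κ * ∑ i, |x i| + κ * ∑ i, |y i| := by ring)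
    (by
      intro x
      calc F x ≤ |F x| := le_abs_self _
      _ = |f x| := rfl
      _ ≤ κ * ∑ i, |(x : Fin n → ℝ) i| := hκb x)
  have habs : ∀ x : Fin n → ℝ, |g x| ≤ κ * ∑ i, |x i| := by
    intro x
    rw [abs_le]
    constructor
    · have h1 := hgN (-x)
      rw [map_neg] at h1
      have h2 : κ * ∑ i, |(-x) i| = κ * ∑ i, |x i| := by
        congr 1
        exact Finset.sum_congr rfl fun i _ => by simp
      rw [h2] at h1
      linarith
    · exact hgN x
  set η : Fin n → ℝ := fun i => if v i = 0 then g (Pi.single i 1) else Real.sign (v i)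
    with hηdef
  have hperp : ∀ h : Fin n → ℝ, A *ᵥ h = 0 → ∑ i, η i * h i = 0 := by
    intro h hA
    have hhK : h ∈ Kh := (hmemKh h).2 hA
    have hsplit := Finset.sum_add_sum_compl T (fun i => η i * h i)
    have hTpart : ∑ i ∈ T, η i * h i = ∑ i ∈ T, Real.sign (v i) * h i := by
      refine Finset.sum_congr rfl fun i hi => ?_
      rw [hηdef]
      simp only []
      rw [if_neg ((hmemT i).1 hi)]
    have hTcpart : ∑ i ∈ Tᶜ, η i * h i = g (π h) := by
      have h1 : ∑ i ∈ Tᶜ, η i * h i = ∑ i ∈ Tᶜ, g ((h i) • (Pi.single i 1 : Fin n → ℝ)) := by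
        refine Finset.sum_congr rfl fun i hi => ?_
        rw [Finset.mem_compl] at hi
        have hvi : v i = 0 := not_not.1 (fun hne => hi ((hmemT i).2 hne))
        rw [_root_.map_smul, hηdef]
        simp only [smul_eq_mul]
        rw [if_pos hvi]
        ring
      rw [h1, ← map_sum]
      congr 1
      funext k
      rw [Finset.sum_apply]
      have h2 : ∀ i, ((h i) • (Pi.single i 1 : Fin n → ℝ)) k = if i = k then h i else 0 := by
        intro i
        simp only [Pi.smul_apply, smul_eq_mul, Pi.single_apply]
        by_cases hik : i = k
        · subst hik; simp
        · rw [if_neg hik, if_neg (fun hk => hik hk.symm)]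
          simp
      rw [Finset.sum_congr rfl (fun i _ => h2 i)]
      rw [Finset.sum_ite_eq' Tᶜ k h]
      rw [hπ_apply]
      by_cases hk : v k = 0
      · rw [if_pos hk, if_pos (Finset.mem_compl.2 (fun hmem => ((hmemT k).1 hmem) hk))]
      · rw [if_neg hk, if_neg (fun (hmem : k ∈ Tᶜ) => (Finset.mem_compl.1 hmem) ((hmemT k).2 hk))]
    have hπhV : π h ∈ V := Submodule.mem_map_of_mem hhK
    have hgπ : g (π h) = φ h := by
      have hx : g (π h) = f ⟨π h, hπhV⟩ := hg_ext ⟨π h, hπhV⟩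
      have hy : (⟨π h, hπhV⟩ : V) = e ⟨h, hhK⟩ := Subtype.ext (hecoe ⟨h, hhK⟩).symm
      rw [hx, hy, hf_eval]
    have hφh : φ h = -∑ i ∈ T, Real.sign (v i) * h i := hφ_apply h
    rw [← hsplit, hTpart, hTcpart, hgπ, hφh]
    ring
  obtain ⟨w, hw⟩ := range_transpose A η hperp
  refine ⟨w, ?_, ?_⟩
  · intro i hi
    rw [hw, hηdef]
    simp only []
    rw [if_neg hi]
  · intro i hi
    rw [hw, hηdef]
    simp only []
    rw [if_pos hi]
    have h1 := habs (Pi.single i 1)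
    have h2 : ∑ k, |(Pi.single i 1 : Fin n → ℝ) k| = 1 := by
      have h3 : ∀ k, |(Pi.single i 1 : Fin n → ℝ) k| = if k = i then 1 else 0 := by
        intro k
        rw [Pi.single_apply]
        by_cases hk : k = i <;> simp [hk]
      rw [Finset.sum_congr rfl (fun k _ => h3 k), Finset.sum_ite_eq' univ i (fun _ => (1:ℝ))]
      simp
    rw [h2, mul_one] at h1
    exact lt_of_le_of_lt h1 hκ1


end SCAux

open SCAux Finset in
set_option maxHeartbeats 1000000 in
/-- The RIP of order `2s` with constant `δ < 1/√2` implies, for every `s`-sparse vector `v`,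
the source condition and injectivity of `A` restricted to the support of `v`. -/
theorem stmt3 {m n : ℕ} (s : ℕ) (A : Matrix (Fin m) (Fin n) ℝ) (δ : ℝ)
    (hδ : δ < 1 / Real.sqrt 2)
    (hRIP : ∀ z : Fin n → ℝ, IsSparse (2 * s) z →
      (1 - δ) * ∑ i, z i ^ 2 ≤ ∑ i, (A *ᵥ z) i ^ 2 ∧
      ∑ i, (A *ᵥ z) i ^ 2 ≤ (1 + δ) * ∑ i, z i ^ 2) :
    ∀ v : Fin n → ℝ, IsSparse s v →
      (∃ w : Fin m → ℝ,
        (∀ i, v i ≠ 0 → (Aᵀ *ᵥ w) i = Real.sign (v i)) ∧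
        (∀ i, v i = 0 → |(Aᵀ *ᵥ w) i| < 1)) ∧
      (∀ z₁ z₂ : Fin n → ℝ, (∀ i, v i = 0 → z₁ i = 0) →
        (∀ i, v i = 0 → z₂ i = 0) → A *ᵥ z₁ = A *ᵥ z₂ → z₁ = z₂) := by
  classical
  have hsqrt2 : (1:ℝ) < Real.sqrt 2 := by
    rw [show (1:ℝ) = Real.sqrt 1 from (Real.sqrt_one).symm]
    exact Real.sqrt_lt_sqrt (by norm_num) (by norm_num)
  have hδ1 : δ < 1 := lt_trans hδ (by rw [div_lt_one (by linarith)]; exact hsqrt2)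
  intro v hv
  set T : Finset (Fin n) := Finset.univ.filter (fun i => v i ≠ 0) with hTdef
  have hmemT : ∀ i, i ∈ T ↔ v i ≠ 0 := by intro i; simp [hTdef]
  have hTcard : T.card ≤ s := by
    obtain ⟨T', hT'c, hT'⟩ := hv
    refine le_trans (Finset.card_le_card ?_) hT'c
    intro i hi
    rw [hmemT] at hi
    by_contra hmem
    exact hi (hT' i hmem)
  -- injectivity on support
  have hinj : ∀ z : Fin n → ℝ, (∀ i, v i = 0 → z i = 0) → A *ᵥ z = 0 → z = 0 := by
    intro z hz hAz
    have hsp : IsSparse (2*s) z := by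
      refine ⟨T, by omega, fun i hi => ?_⟩
      rw [hmemT, not_not] at hi
      exact hz i hi
    have hlow := (hRIP z hsp).1
    rw [hAz] at hlow
    simp only [Pi.zero_apply] at hlow
    rw [show ∑ _i : Fin m, (0:ℝ)^2 = 0 from by simp] at hlow
    have hsum0 : ∑ i, z i ^2 ≤ 0 := by nlinarith [hlow]
    have := (Finset.sum_eq_zero_iff_of_nonneg (fun i (_ : i ∈ univ) => sq_nonneg (z i))).1
      (le_antisymm hsum0 (Finset.sum_nonneg fun i _ => sq_nonneg _))
    funext i
    exact sq_eq_zero_iff.1 (this i (Finset.mem_univ i))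
  have hinj2 : ∀ z₁ z₂ : Fin n → ℝ, (∀ i, v i = 0 → z₁ i = 0) →
      (∀ i, v i = 0 → z₂ i = 0) → A *ᵥ z₁ = A *ᵥ z₂ → z₁ = z₂ := by
    intro z₁ z₂ h1 h2 heq
    have hz : A *ᵥ (z₁ - z₂) = 0 := by
      rw [Matrix.mulVec_sub, heq, sub_self]
    have := hinj (z₁ - z₂) (fun i hi => by simp [h1 i hi, h2 i hi]) hz
    funext i
    have := congrFun this i
    simp only [Pi.sub_apply, Pi.zero_apply] at this
    linarith
  refine ⟨?_, hinj2⟩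
  -- certificate
  by_cases hvz : ∀ i, v i = 0
  · refine ⟨0, fun i hi => absurd (hvz i) hi, fun i _ => ?_⟩
    rw [Matrix.mulVec_zero]
    norm_num
  · push_neg at hvz
    obtain ⟨i₀, hi₀⟩ := hvz
    have hs1 : 1 ≤ s := by
      have : i₀ ∈ T := (hmemT i₀).2 hi₀
      have := Finset.card_pos.2 ⟨i₀, this⟩
      omega
    have hn1 : 1 ≤ n := by
      have := i₀.2; omega
    -- δ ≥ 0
    have hδ0 : 0 ≤ δ := by
      have hsp : IsSparse (2*s) (Pi.single i₀ 1) := by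
        refine ⟨{i₀}, by simp; omega, fun i hi => ?_⟩
        rw [Finset.mem_singleton] at hi
        exact Pi.single_eq_of_ne hi 1
      obtain ⟨hl, hu⟩ := hRIP _ hsp
      have hsum1 : ∑ i, (Pi.single i₀ 1 : Fin n → ℝ) i ^ 2 = 1 := by
        rw [Finset.sum_eq_single i₀]
        · simp
        · intro b _ hb; rw [Pi.single_eq_of_ne hb]; norm_num
        · intro hb; exact absurd (Finset.mem_univ i₀) hb
      rw [hsum1] at hl hu
      linarith
    have hδ2 : δ^2 < 1/2 := by
      have h2 : Real.sqrt 2 > 0 := by linarith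
      have : δ * Real.sqrt 2 < 1 := by
        rw [div_eq_mul_inv] at hδ
        calc δ * Real.sqrt 2 < (1 * (Real.sqrt 2)⁻¹) * Real.sqrt 2 := by
              apply mul_lt_mul_of_pos_right hδ h2
        _ = 1 := by field_simp
      nlinarith [Real.sq_sqrt (by norm_num : (0:ℝ) ≤ 2), hδ0, Real.sqrt_nonneg 2]
    set s' := min s n with hs'def
    have hs'1 : 1 ≤ s' := le_min hs1 hn1
    have hs'n : s' ≤ n := min_le_right _ _
    have hT's : T.card ≤ s' := le_min hTcard (le_trans (Finset.card_le_univ T) (by simp))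
    have hRl : ∀ z : Fin n → ℝ, (spt z).card ≤ 2*s' →
        (1 - δ) * ∑ i, z i ^ 2 ≤ ∑ i, (A *ᵥ z) i ^ 2 := by
      intro z hz
      refine (hRIP z ⟨spt z, by omega, fun i hi => ?_⟩).1
      rw [mem_spt, not_not] at hi
      exact hi
    have hRu : ∀ z : Fin n → ℝ, (spt z).card ≤ 2*s' →
        ∑ i, (A *ᵥ z) i ^ 2 ≤ (1 + δ) * ∑ i, z i ^ 2 := by
      intro z hz
      refine (hRIP z ⟨spt z, by omega, fun i hi => ?_⟩).2
      rw [mem_spt, not_not] at hi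
      exact hi
    have hNSP : ∀ h : Fin n → ℝ, A *ᵥ h = 0 → h ≠ 0 →
        ∑ i ∈ T, |h i| < ∑ i ∈ Tᶜ, |h i| :=
      fun h hker hne => nsp s' hs'1 hs'n A δ hδ0 hδ2 hRl hRu T hT's h hker hne
    exact certificate A v T hmemT hinj hNSP
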